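/- Let w : Fin 3 → ℝ with each w i equal to 1 or −1, let Q be the diagonal quadratic form on Fin 3 → ℝ with weights w, let A = CliffordAlgebra Q, and let conj : A → A denote Clifford conjugation (reversal composed with grade involution). Let a, b, c ∈ A and set d := a^2 + b·conj b + a·(b + conj b). If d is a unit of A, then x := d⁻¹·(a·c + c·conj b) (using the inverse of the unit d) satisfies the Sylvester equation a·x + x·b = c. -/
import Mathlib

/-- Clifford conjugation: reversal composed with grade involution. -/
noncomputable def cliffordConj {n : ℕ} (w : Fin n → ℝ) :
    CliffordAlgebra (QuadraticMap.weightedSumSquares ℝ w) →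
      CliffordAlgebra (QuadraticMap.weightedSumSquares ℝ w) :=
  fun a => CliffordAlgebra.reverse (CliffordAlgebra.involute a)

namespace Clifford3Aux

open CliffordAlgebra

variable (w : Fin 3 → ℝ)

noncomputable def e (i : Fin 3) : CliffordAlgebra (QuadraticMap.weightedSumSquares ℝ w) :=
  ι (QuadraticMap.weightedSumSquares ℝ w) (Pi.single i 1)

lemma Q_single (i : Fin 3) : QuadraticMap.weightedSumSquares ℝ w (Pi.single i 1) = w i := by
  rw [QuadraticMap.weightedSumSquares_apply]
  rw [Finset.sum_eq_single i]
  · simp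
  · intro j _ hj; simp [Pi.single_apply, hj]
  · simp

lemma ortho {i j : Fin 3} (h : i ≠ j) :
    (QuadraticMap.weightedSumSquares ℝ w).IsOrtho (Pi.single i 1) (Pi.single j 1) := by
  fin_cases i <;> fin_cases j <;>
    simp_all [QuadraticMap.isOrtho_def, QuadraticMap.weightedSumSquares_apply,
      Fin.sum_univ_three, Pi.single_apply] <;> ring

lemma e_sq (i : Fin 3) : e w i * e w i = algebraMap ℝ _ (w i) := by
  rw [e, ι_sq_scalar, Q_single]

lemma e_anti {i j : Fin 3} (h : i ≠ j) : e w i * e w j = -(e w j * e w i) :=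
  ι_mul_ι_comm_of_isOrtho (ortho w h)

lemma q0 : e w 0 * e w 0 = w 0 • 1 := by rw [e_sq, Algebra.algebraMap_eq_smul_one]
lemma q1 : e w 1 * e w 1 = w 1 • 1 := by rw [e_sq, Algebra.algebraMap_eq_smul_one]
lemma q2 : e w 2 * e w 2 = w 2 • 1 := by rw [e_sq, Algebra.algebraMap_eq_smul_one]

lemma s0 (x) : e w 0 * (e w 0 * x) = w 0 • x := by
  rw [← mul_assoc, e_sq, ← Algebra.smul_def]
lemma s1 (x) : e w 1 * (e w 1 * x) = w 1 • x := by
  rw [← mul_assoc, e_sq, ← Algebra.smul_def]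
lemma s2 (x) : e w 2 * (e w 2 * x) = w 2 • x := by
  rw [← mul_assoc, e_sq, ← Algebra.smul_def]

lemma b10 : e w 1 * e w 0 = -(e w 0 * e w 1) := e_anti w (by decide)
lemma b20 : e w 2 * e w 0 = -(e w 0 * e w 2) := e_anti w (by decide)
lemma b21 : e w 2 * e w 1 = -(e w 1 * e w 2) := e_anti w (by decide)

lemma n10 (x) : e w 1 * (e w 0 * x) = -(e w 0 * (e w 1 * x)) := by
  rw [← mul_assoc, b10, neg_mul, mul_assoc]
lemma n20 (x) : e w 2 * (e w 0 * x) = -(e w 0 * (e w 2 * x)) := by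
  rw [← mul_assoc, b20, neg_mul, mul_assoc]
lemma n21 (x) : e w 2 * (e w 1 * x) = -(e w 1 * (e w 2 * x)) := by
  rw [← mul_assoc, b21, neg_mul, mul_assoc]

end Clifford3Aux

section Main

open CliffordAlgebra Clifford3Aux

variable (w : Fin 3 → ℝ)

local notation "cj" => cliffordConj w

lemma cj_add (x y) : cj (x + y) = cj x + cj y := by simp [cliffordConj]
lemma cj_smul (r : ℝ) (x) : cj (r • x) = r • cj x := by simp [cliffordConj]
lemma cj_zero : cj 0 = 0 := by simp [cliffordConj]
lemma cj_one : cj 1 = 1 := by simp [cliffordConj]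
lemma cj_mul (x y) : cj (x * y) = cj y * cj x := by
  simp [cliffordConj, map_mul, reverse.map_mul]
lemma cj_cj (x) : cj (cj x) = x := by
  simp [cliffordConj, reverse_involute, reverse_reverse]
lemma cj_e (i : Fin 3) : cj (e w i) = -(e w i) := by
  simp [cliffordConj, e, involute_ι, reverse_ι]

/-- the spanning submodule -/
noncomputable def M : Submodule ℝ (CliffordAlgebra (QuadraticMap.weightedSumSquares ℝ w)) :=
  Submodule.span ℝ {1, e w 0, e w 1, e w 2, e w 0 * e w 1, e w 0 * e w 2, e w 1 * e w 2,
    e w 0 * e w 1 * e w 2}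

lemma mem1 : (1 : CliffordAlgebra (QuadraticMap.weightedSumSquares ℝ w)) ∈ M w := Submodule.subset_span (by simp)
lemma mem2 : e w 0 ∈ M w := Submodule.subset_span (by simp)
lemma mem3 : e w 1 ∈ M w := Submodule.subset_span (by simp)
lemma mem4 : e w 2 ∈ M w := Submodule.subset_span (by simp)
lemma mem5 : e w 0 * e w 1 ∈ M w := Submodule.subset_span (by simp)
lemma mem6 : e w 0 * e w 2 ∈ M w := Submodule.subset_span (by simp)
lemma mem7 : e w 1 * e w 2 ∈ M w := Submodule.subset_span (by simp)
lemma mem8 : e w 0 * e w 1 * e w 2 ∈ M w := Submodule.subset_span (by simp)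

lemma ι_decomp (m : Fin 3 → ℝ) :
    ι (QuadraticMap.weightedSumSquares ℝ w) m = m 0 • e w 0 + m 1 • e w 1 + m 2 • e w 2 := by
  have hm : m = m 0 • (Pi.single 0 1 : Fin 3 → ℝ) + m 1 • (Pi.single 1 1 : Fin 3 → ℝ)
      + m 2 • (Pi.single 2 1 : Fin 3 → ℝ) := by
    ext j; fin_cases j <;> simp [Pi.single_apply]
  rw [hm]
  simp [e, map_add, map_smul]

lemma e0_mul_mem (x) (hx : x ∈ M w) : e w 0 * x ∈ M w := by
  induction hx using Submodule.span_induction with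
  | mem s hs =>
    simp only [Set.mem_insert_iff, Set.mem_singleton_iff] at hs
    rcases hs with rfl | rfl | rfl | rfl | rfl | rfl | rfl | rfl
    · rw [mul_one]; exact mem2 w
    · rw [q0]; exact Submodule.smul_mem _ _ (mem1 w)
    · exact mem5 w
    · exact mem6 w
    · rw [s0]; exact Submodule.smul_mem _ _ (mem3 w)
    · rw [s0]; exact Submodule.smul_mem _ _ (mem4 w)
    · rw [← mul_assoc]; exact mem8 w
    · rw [mul_assoc, s0]; exact Submodule.smul_mem _ _ (mem7 w)
  | zero => rw [mul_zero]; exact Submodule.zero_mem _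
  | add x y _ _ ihx ihy => rw [mul_add]; exact Submodule.add_mem _ ihx ihy
  | smul r x _ ih => rw [mul_smul_comm]; exact Submodule.smul_mem _ _ ih

lemma e1_mul_mem (x) (hx : x ∈ M w) : e w 1 * x ∈ M w := by
  induction hx using Submodule.span_induction with
  | mem s hs =>
    simp only [Set.mem_insert_iff, Set.mem_singleton_iff] at hs
    rcases hs with rfl | rfl | rfl | rfl | rfl | rfl | rfl | rfl
    · rw [mul_one]; exact mem3 w
    · rw [b10]; exact Submodule.neg_mem _ (mem5 w)
    · rw [q1]; exact Submodule.smul_mem _ _ (mem1 w)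
    · exact mem7 w
    · have : e w 1 * (e w 0 * e w 1) = -(w 1 • e w 0) := by
        rw [n10, q1, mul_smul_comm, mul_one]
      rw [this]; exact Submodule.neg_mem _ (Submodule.smul_mem _ _ (mem2 w))
    · have : e w 1 * (e w 0 * e w 2) = -(e w 0 * e w 1 * e w 2) := by
        rw [n10, mul_assoc]
      rw [this]; exact Submodule.neg_mem _ (mem8 w)
    · rw [s1]; exact Submodule.smul_mem _ _ (mem4 w)
    · have : e w 1 * (e w 0 * e w 1 * e w 2) = -(w 1 • (e w 0 * e w 2)) := by
        rw [mul_assoc, n10, s1, mul_smul_comm]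
      rw [this]; exact Submodule.neg_mem _ (Submodule.smul_mem _ _ (mem6 w))
  | zero => rw [mul_zero]; exact Submodule.zero_mem _
  | add x y _ _ ihx ihy => rw [mul_add]; exact Submodule.add_mem _ ihx ihy
  | smul r x _ ih => rw [mul_smul_comm]; exact Submodule.smul_mem _ _ ih

lemma e2_mul_mem (x) (hx : x ∈ M w) : e w 2 * x ∈ M w := by
  induction hx using Submodule.span_induction with
  | mem s hs =>
    simp only [Set.mem_insert_iff, Set.mem_singleton_iff] at hs
    rcases hs with rfl | rfl | rfl | rfl | rfl | rfl | rfl | rfl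
    · rw [mul_one]; exact mem4 w
    · rw [b20]; exact Submodule.neg_mem _ (mem6 w)
    · rw [b21]; exact Submodule.neg_mem _ (mem7 w)
    · rw [q2]; exact Submodule.smul_mem _ _ (mem1 w)
    · have : e w 2 * (e w 0 * e w 1) = e w 0 * e w 1 * e w 2 := by
        rw [n20, b21, mul_neg, neg_neg, ← mul_assoc]
      rw [this]; exact mem8 w
    · have : e w 2 * (e w 0 * e w 2) = -(w 2 • e w 0) := by
        rw [n20, q2, mul_smul_comm, mul_one]
      rw [this]; exact Submodule.neg_mem _ (Submodule.smul_mem _ _ (mem2 w))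
    · have : e w 2 * (e w 1 * e w 2) = -(w 2 • e w 1) := by
        rw [n21, q2, mul_smul_comm, mul_one]
      rw [this]; exact Submodule.neg_mem _ (Submodule.smul_mem _ _ (mem3 w))
    · have : e w 2 * (e w 0 * e w 1 * e w 2) = w 2 • (e w 0 * e w 1) := by
        rw [mul_assoc, n20, n21, q2, mul_smul_comm, mul_one, mul_neg, neg_neg, mul_smul_comm]
      rw [this]; exact Submodule.smul_mem _ _ (mem5 w)
  | zero => rw [mul_zero]; exact Submodule.zero_mem _
  | add x y _ _ ihx ihy => rw [mul_add]; exact Submodule.add_mem _ ihx ihy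
  | smul r x _ ih => rw [mul_smul_comm]; exact Submodule.smul_mem _ _ ih

lemma mul_mem_M (a : CliffordAlgebra (QuadraticMap.weightedSumSquares ℝ w)) :
    ∀ x ∈ M w, a * x ∈ M w := by
  induction a using CliffordAlgebra.induction with
  | algebraMap r =>
    intro x hx; rw [← Algebra.smul_def]; exact Submodule.smul_mem _ _ hx
  | ι m =>
    intro x hx
    rw [ι_decomp, add_mul, add_mul, smul_mul_assoc, smul_mul_assoc, smul_mul_assoc]
    exact Submodule.add_mem _
      (Submodule.add_mem _ (Submodule.smul_mem _ _ (e0_mul_mem w x hx))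
        (Submodule.smul_mem _ _ (e1_mul_mem w x hx)))
      (Submodule.smul_mem _ _ (e2_mul_mem w x hx))
  | add a b iha ihb =>
    intro x hx; rw [add_mul]; exact Submodule.add_mem _ (iha x hx) (ihb x hx)
  | mul a b iha ihb =>
    intro x hx; rw [mul_assoc]; exact iha _ (ihb x hx)

lemma mem_M (x : CliffordAlgebra (QuadraticMap.weightedSumSquares ℝ w)) : x ∈ M w := by
  have := mul_mem_M w x 1 (mem1 w)
  rwa [mul_one] at this

/-- an element commuting with the generators is central -/
lemma central_of_comm_e (z : CliffordAlgebra (QuadraticMap.weightedSumSquares ℝ w))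
    (hz : ∀ k, z * e w k = e w k * z)
    (y : CliffordAlgebra (QuadraticMap.weightedSumSquares ℝ w)) : z * y = y * z := by
  induction y using CliffordAlgebra.induction with
  | algebraMap r => rw [← Algebra.commutes]
  | ι m =>
    rw [ι_decomp, mul_add, mul_add, add_mul, add_mul, mul_smul_comm, mul_smul_comm,
      mul_smul_comm, smul_mul_assoc, smul_mul_assoc, smul_mul_assoc, hz 0, hz 1, hz 2]
  | add a b iha ihb => rw [mul_add, add_mul, iha, ihb]
  | mul a b iha ihb => rw [← mul_assoc, iha, mul_assoc, ihb, ← mul_assoc]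

lemma cj_e01 : cj (e w 0 * e w 1) = -(e w 0 * e w 1) := by
  rw [cj_mul, cj_e, cj_e, neg_mul_neg, b10]
lemma cj_e02 : cj (e w 0 * e w 2) = -(e w 0 * e w 2) := by
  rw [cj_mul, cj_e, cj_e, neg_mul_neg, b20]
lemma cj_e12 : cj (e w 1 * e w 2) = -(e w 1 * e w 2) := by
  rw [cj_mul, cj_e, cj_e, neg_mul_neg, b21]
lemma cj_e012 : cj (e w 0 * e w 1 * e w 2) = e w 0 * e w 1 * e w 2 := by
  rw [cj_mul, cj_e01, cj_e, neg_mul_neg, n20, b21, mul_neg, neg_neg, ← mul_assoc]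

lemma e012_comm (k : Fin 3) :
    (e w 0 * e w 1 * e w 2) * e w k = e w k * (e w 0 * e w 1 * e w 2) := by
  have L0 : (e w 0 * e w 1 * e w 2) * e w 0 = w 0 • (e w 1 * e w 2) := by
    rw [mul_assoc, b20, mul_neg, mul_assoc, n10, mul_neg, neg_neg, s0]
  have R0 : e w 0 * (e w 0 * e w 1 * e w 2) = w 0 • (e w 1 * e w 2) := by
    rw [mul_assoc, s0]
  have L1 : (e w 0 * e w 1 * e w 2) * e w 1 = -(w 1 • (e w 0 * e w 2)) := by
    rw [mul_assoc, b21, mul_neg, mul_assoc, s1, mul_smul_comm]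
  have R1 : e w 1 * (e w 0 * e w 1 * e w 2) = -(w 1 • (e w 0 * e w 2)) := by
    rw [mul_assoc, n10, s1, mul_smul_comm]
  have L2 : (e w 0 * e w 1 * e w 2) * e w 2 = w 2 • (e w 0 * e w 1) := by
    rw [mul_assoc, q2, mul_smul_comm, mul_one]
  have R2 : e w 2 * (e w 0 * e w 1 * e w 2) = w 2 • (e w 0 * e w 1) := by
    rw [mul_assoc, n20, n21, q2, mul_smul_comm, mul_one, mul_neg, neg_neg, mul_smul_comm]
  fin_cases k
  · show (e w 0 * e w 1 * e w 2) * e w 0 = e w 0 * (e w 0 * e w 1 * e w 2)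
    rw [L0, R0]
  · show (e w 0 * e w 1 * e w 2) * e w 1 = e w 1 * (e w 0 * e w 1 * e w 2)
    rw [L1, R1]
  · show (e w 0 * e w 1 * e w 2) * e w 2 = e w 2 * (e w 0 * e w 1 * e w 2)
    rw [L2, R2]

lemma sigma_comm_e (x : CliffordAlgebra (QuadraticMap.weightedSumSquares ℝ w))
    (k : Fin 3) : (x + cj x) * e w k = e w k * (x + cj x) := by
  have hx := mem_M w x
  induction hx using Submodule.span_induction with
  | mem s hs =>
    simp only [Set.mem_insert_iff, Set.mem_singleton_iff] at hs
    rcases hs with rfl | rfl | rfl | rfl | rfl | rfl | rfl | rfl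
    · rw [cj_one]; rw [add_mul, mul_add, one_mul, mul_one]
    · rw [cj_e, add_neg_cancel, zero_mul, mul_zero]
    · rw [cj_e, add_neg_cancel, zero_mul, mul_zero]
    · rw [cj_e, add_neg_cancel, zero_mul, mul_zero]
    · rw [cj_e01, add_neg_cancel, zero_mul, mul_zero]
    · rw [cj_e02, add_neg_cancel, zero_mul, mul_zero]
    · rw [cj_e12, add_neg_cancel, zero_mul, mul_zero]
    · rw [cj_e012, add_mul, mul_add, e012_comm]
  | zero => rw [cj_zero, add_zero, zero_mul, mul_zero]
  | add x y hx hy ihx ihy =>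
    rw [cj_add, show x + y + (cj x + cj y) = (x + cj x) + (y + cj y) by abel,
      add_mul, mul_add, ihx, ihy]
  | smul r x hx ih =>
    rw [cj_smul, ← smul_add, smul_mul_assoc, mul_smul_comm, ih]

lemma sigma_central (x y : CliffordAlgebra (QuadraticMap.weightedSumSquares ℝ w)) :
    (x + cj x) * y = y * (x + cj x) :=
  central_of_comm_e w _ (fun k => sigma_comm_e w x k) y

lemma cj_comm (b : CliffordAlgebra (QuadraticMap.weightedSumSquares ℝ w)) :
    cj b * b = b * cj b := by
  have h := sigma_central w b b
  rw [add_mul, mul_add] at h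
  exact add_left_cancel h

lemma norm_central (b y : CliffordAlgebra (QuadraticMap.weightedSumSquares ℝ w)) :
    (b * cj b) * y = y * (b * cj b) := by
  have hcc : cj (b * cj b) = b * cj b := by rw [cj_mul, cj_cj]
  have h := sigma_central w (b * cj b) y
  rw [hcc, add_mul, mul_add] at h
  have h2 : (2 : ℝ) • ((b * cj b) * y) = (2 : ℝ) • (y * (b * cj b)) := by
    rw [two_smul, two_smul]; exact h
  exact smul_right_injective _ (two_ne_zero) h2

end Main

theorem clifford3_sylvester_left_solution (w : Fin 3 → ℝ)
    (hw : ∀ i, w i = 1 ∨ w i = -1)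
    (a b c : CliffordAlgebra (QuadraticMap.weightedSumSquares ℝ w))
    (hd : IsUnit (a ^ 2 + b * cliffordConj w b + a * (b + cliffordConj w b))) :
    a * (↑hd.unit⁻¹ * (a * c + c * cliffordConj w b)) +
      (↑hd.unit⁻¹ * (a * c + c * cliffordConj w b)) * b = c := by
  set σb := cliffordConj w b with hσb
  have hs : ∀ y, (b + σb) * y = y * (b + σb) := fun y => sigma_central w b y
  have hp : ∀ y, (b * σb) * y = y * (b * σb) := fun y => norm_central w b y
  have hq : σb * b = b * σb := cj_comm w b
  set d := a ^ 2 + b * σb + a * (b + σb) with hdd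
  have hcomm : Commute a d := by
    refine Commute.add_right (Commute.add_right ?_ ?_) ?_
    · exact (Commute.refl a).pow_right 2
    · exact (Commute.symm (hp a))
    · exact Commute.mul_right (Commute.refl a) (Commute.symm (hs a))
  have hu : (hd.unit : CliffordAlgebra (QuadraticMap.weightedSumSquares ℝ w)) = d :=
    hd.unit_spec
  have hcommu : Commute a ↑hd.unit⁻¹ := by
    apply Commute.units_inv_right
    rw [Commute, SemiconjBy, hu]
    exact hcomm
  have key : a * (a * c + c * σb) + (a * c + c * σb) * b = d * c := by
    have h1 : c * (b + σb) = (b + σb) * c := (hs c).symm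
    have h2 : c * (σb * b) = (b * σb) * c := by rw [hq]; exact (hp c).symm
    calc a * (a * c + c * σb) + (a * c + c * σb) * b
        = a ^ 2 * c + (a * (c * (b + σb)) + c * (σb * b)) := by noncomm_ring
      _ = a ^ 2 * c + (a * ((b + σb) * c) + (b * σb) * c) := by rw [h1, h2]
      _ = d * c := by rw [hdd]; noncomm_ring
  calc a * (↑hd.unit⁻¹ * (a * c + c * σb)) + (↑hd.unit⁻¹ * (a * c + c * σb)) * b
      = ↑hd.unit⁻¹ * (a * (a * c + c * σb) + (a * c + c * σb) * b) := by
        rw [← mul_assoc, hcommu.eq]; noncomm_ring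
    _ = ↑hd.unit⁻¹ * (d * c) := by rw [key]
    _ = ↑hd.unit⁻¹ * (↑hd.unit * c) := by rw [hu]
    _ = c := by rw [← mul_assoc, Units.inv_mul, one_mul]
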